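/- Let T̂ : 𝕋¹×ℝ → 𝕋¹×ℝ be a continuous skew product over an irrational rotation with monotone increasing fibre maps, and let A ⊆ 𝕋¹×ℝ be a minimal set for T̂ (compact, invariant, every orbit dense). Then the set {θ ∈ 𝕋¹ : φ⁺_A(θ) = φ⁻_A(θ)} is residual in 𝕋¹; in particular every minimal set is pinched. -/

import Mathlib

open Set


lemma dense_zmultiples_omega (ω : ℝ) (hω : Irrational ω) :
    Dense ((AddSubgroup.zmultiples ((ω : AddCircle (1:ℝ)))) : Set (AddCircle (1:ℝ))) := by
  set S : AddSubgroup ℝ := AddSubgroup.closure {ω, 1} with hS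
  have hd : Dense (S : Set ℝ) := by
    rcases S.dense_or_cyclic with h | ⟨a, ha⟩
    · exact h
    · exfalso
      have hωS : ω ∈ S := AddSubgroup.subset_closure (by simp)
      have h1S : (1:ℝ) ∈ S := AddSubgroup.subset_closure (by simp)
      rw [ha, AddSubgroup.mem_closure_singleton] at hωS h1S
      obtain ⟨m, hm⟩ := hωS
      obtain ⟨n, hn⟩ := h1S
      rw [zsmul_eq_mul] at hm hn
      have hn0 : (n:ℝ) ≠ 0 := by
        intro h; rw [h, zero_mul] at hn; exact zero_ne_one hn
      refine hω ⟨(m : ℚ) / (n : ℚ), ?_⟩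
      push_cast
      rw [← hm, div_eq_iff hn0]
      linear_combination (-(m:ℝ)) * hn
  have f : ℝ →+ AddCircle (1:ℝ) := QuotientAddGroup.mk' (AddSubgroup.zmultiples (1:ℝ))
  have hcont : Continuous ((↑) : ℝ → AddCircle (1:ℝ)) := continuous_quotient_mk'
  have hsurj : Function.Surjective ((↑) : ℝ → AddCircle (1:ℝ)) :=
    Quotient.mk''_surjective
  have himg : Dense (((↑) : ℝ → AddCircle (1:ℝ)) '' (S : Set ℝ)) :=
    (hsurj.denseRange).dense_image hcont hd
  refine himg.mono ?_
  rintro _ ⟨x, hx, rfl⟩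
  have hle : S ≤ (AddSubgroup.zmultiples ((ω : AddCircle (1:ℝ)))).comap
      (QuotientAddGroup.mk' (AddSubgroup.zmultiples (1:ℝ))) := by
    rw [hS, AddSubgroup.closure_le]
    rintro y (rfl | rfl)
    · exact AddSubgroup.mem_zmultiples _
    · simp only [SetLike.mem_coe, AddSubgroup.mem_comap, QuotientAddGroup.mk'_apply]
      have h1 : ((1:ℝ) : AddCircle (1:ℝ)) = 0 := AddCircle.coe_period (1:ℝ)
      rw [show QuotientAddGroup.mk (1:ℝ) = ((1:ℝ) : AddCircle (1:ℝ)) from rfl, h1]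
      exact zero_mem _
  exact hle hx

/-- every minimal set of a quasiperiodically forced monotone map is pinched:
the set where the two bounding graphs agree is residual. -/
theorem minimal_set_pinched (ω : ℝ) (hω : Irrational ω)
    (T : AddCircle (1:ℝ) × ℝ → AddCircle (1:ℝ) × ℝ)
    (hcont : Continuous T)
    (hbase : ∀ p : AddCircle (1:ℝ) × ℝ, (T p).1 = p.1 + (ω : AddCircle (1:ℝ)))
    (hmono : ∀ θ : AddCircle (1:ℝ), Monotone fun x : ℝ => (T (θ, x)).2)
    (A : Set (AddCircle (1:ℝ) × ℝ)) (hne : A.Nonempty) (hA : IsCompact A)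
    (hinv : T '' A = A)
    (hmin : ∀ p ∈ A, closure (Set.range fun n : ℕ => T^[n] p) = A) :
    {θ : AddCircle (1:ℝ) |
        sSup {x : ℝ | (θ, x) ∈ A} = sInf {x : ℝ | (θ, x) ∈ A}} ∈
      residual (AddCircle (1:ℝ)) := by
  classical
  set F : AddCircle (1:ℝ) → Set ℝ := fun θ => {x : ℝ | (θ, x) ∈ A} with hFdef
  set φ : AddCircle (1:ℝ) → ℝ := fun θ => sSup (F θ) with hφdef
  -- boundedness of fibers
  have hsub2 : ∀ θ, F θ ⊆ Prod.snd '' A := fun θ x hx => ⟨(θ, x), hx, rfl⟩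
  have hbddA : ∀ θ, BddAbove (F θ) :=
    fun θ => ((hA.image continuous_snd).bddAbove).mono (hsub2 θ)
  have hbddB : ∀ θ, BddBelow (F θ) :=
    fun θ => ((hA.image continuous_snd).bddBelow).mono (hsub2 θ)
  have hFclosed : ∀ θ, IsClosed (F θ) :=
    fun θ => hA.isClosed.preimage (Continuous.prodMk_right θ)
  have hFcpt : ∀ θ, IsCompact (F θ) := by
    intro θ
    obtain ⟨ub, hub⟩ := hbddA θ
    obtain ⟨lb, hlb⟩ := hbddB θ
    exact (isCompact_Icc (a := lb) (b := ub)).of_isClosed_subset (hFclosed θ)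
      (fun x hx => ⟨hlb hx, hub hx⟩)
  -- the projection of A to the base is everything
  have hPuniv : Prod.fst '' A = univ := by
    have hPc : IsClosed (Prod.fst '' A) := (hA.image continuous_fst).isClosed
    have hPeq : (fun θ => θ + (ω : AddCircle (1:ℝ))) '' (Prod.fst '' A) = Prod.fst '' A := by
      rw [Set.image_image]
      calc (fun p : AddCircle (1:ℝ) × ℝ => p.1 + (ω : AddCircle (1:ℝ))) '' A
          = (fun p => (T p).1) '' A := by
            apply Set.image_congr; intro p _; rw [hbase p]
        _ = Prod.fst '' (T '' A) := by rw [Set.image_image]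
        _ = Prod.fst '' A := by rw [hinv]
    have hiff : ∀ θ, θ ∈ Prod.fst '' A ↔ θ + (ω : AddCircle (1:ℝ)) ∈ Prod.fst '' A := by
      intro θ
      constructor
      · intro h; rw [← hPeq]; exact ⟨θ, h, rfl⟩
      · intro h
        rw [← hPeq] at h
        obtain ⟨θ', hθ', hθ'e⟩ := h
        have : θ' = θ := by
          have := add_right_cancel hθ'e; exact this
        rwa [← this]
    obtain ⟨p₀, hp₀⟩ := hne
    have hz : ∀ n : ℤ, p₀.1 + n • (ω : AddCircle (1:ℝ)) ∈ Prod.fst '' A := by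
      intro n
      induction n using Int.induction_on with
      | zero => rw [zero_zsmul, add_zero]; exact ⟨p₀, hp₀, rfl⟩
      | succ n ih =>
        have : p₀.1 + ((n : ℤ) + 1) • (ω : AddCircle (1:ℝ))
            = (p₀.1 + (n : ℤ) • (ω : AddCircle (1:ℝ))) + (ω : AddCircle (1:ℝ)) := by
          rw [add_zsmul, one_zsmul, add_assoc]
        rw [this]
        exact (hiff _).1 ih
      | pred n ih =>
        have h2 : p₀.1 + (-(n : ℤ) - 1) • (ω : AddCircle (1:ℝ)) + (ω : AddCircle (1:ℝ))
            = p₀.1 + (-(n : ℤ)) • (ω : AddCircle (1:ℝ)) := by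
          rw [sub_zsmul, one_zsmul]; abel
        exact (hiff _).2 (by rw [h2]; exact ih)
    have hdense : Dense ((fun x => p₀.1 + x) ''
        ((AddSubgroup.zmultiples ((ω : AddCircle (1:ℝ)))) : Set (AddCircle (1:ℝ)))) := by
      have h := dense_zmultiples_omega ω hω
      have hcs : Continuous (fun x : AddCircle (1:ℝ) => p₀.1 + x) :=
        continuous_const.add continuous_id
      have hss : Function.Surjective (fun x : AddCircle (1:ℝ) => p₀.1 + x) :=
        fun y => ⟨-p₀.1 + y, add_neg_cancel_left _ _⟩
      exact (hss.denseRange).dense_image hcs h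
    have hDP : Dense (Prod.fst '' A) := by
      refine hdense.mono ?_
      rintro _ ⟨x, hx, rfl⟩
      obtain ⟨n, rfl⟩ := AddSubgroup.mem_zmultiples_iff.1 hx
      exact hz n
    exact hPc.closure_eq ▸ hDP.closure_eq
  have hfne : ∀ θ, (F θ).Nonempty := by
    intro θ
    have : θ ∈ Prod.fst '' A := hPuniv ▸ mem_univ θ
    obtain ⟨p, hpA, hp1⟩ := this
    exact ⟨p.2, by simpa [hFdef, ← hp1] using hpA⟩
  have hmemA : ∀ θ, (θ, φ θ) ∈ A := fun θ => (hFcpt θ).sSup_mem (hfne θ)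
  -- upper semicontinuity: {φ < r} is open
  have husc : ∀ r : ℝ, IsOpen {θ | φ θ < r} := by
    intro r
    rw [← isClosed_compl_iff]
    have : {θ | φ θ < r}ᶜ = Prod.fst '' (A ∩ Prod.snd ⁻¹' Ici r) := by
      ext θ
      simp only [mem_compl_iff, mem_setOf_eq, not_lt, mem_image, mem_inter_iff, mem_preimage,
        mem_Ici]
      constructor
      · intro h; exact ⟨(θ, φ θ), ⟨hmemA θ, h⟩, rfl⟩
      · rintro ⟨p, ⟨hpA, hpr⟩, rfl⟩
        exact le_trans hpr (le_csSup (hbddA p.1) hpA)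
    rw [this]
    exact ((hA.inter_right ((isClosed_Ici).preimage continuous_snd)).image continuous_fst).isClosed
  -- the graph of φ is invariant
  have hstep : ∀ θ, T (θ, φ θ) = (θ + (ω : AddCircle (1:ℝ)), φ (θ + (ω : AddCircle (1:ℝ)))) := by
    intro θ
    have hFim : F (θ + (ω : AddCircle (1:ℝ))) = (fun x => (T (θ, x)).2) '' F θ := by
      ext y
      constructor
      · intro hy
        have : (θ + (ω : AddCircle (1:ℝ)), y) ∈ T '' A := by rw [hinv]; exact hy
        obtain ⟨p, hpA, hTp⟩ := this
        have h1 : p.1 + (ω : AddCircle (1:ℝ)) = θ + (ω : AddCircle (1:ℝ)) := by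
          rw [← hbase p, hTp]
        have hp1 : p.1 = θ := add_right_cancel h1
        refine ⟨p.2, ?_, ?_⟩
        · show (θ, p.2) ∈ A; rwa [← hp1, Prod.mk.eta]
        · rw [← hp1]
          show (T ((p.1, p.2) : AddCircle (1:ℝ) × ℝ)).2 = y
          rw [Prod.mk.eta, hTp]
      · rintro ⟨x, hx, rfl⟩
        have hTA : T (θ, x) ∈ A := by rw [← hinv]; exact ⟨(θ, x), hx, rfl⟩
        have : T (θ, x) = (θ + (ω : AddCircle (1:ℝ)), (T (θ, x)).2) := by
          rw [← hbase (θ, x)]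
        rwa [this] at hTA
    have hgc : ContinuousAt (fun x => (T (θ, x)).2) (sSup (F θ)) :=
      (continuous_snd.comp (hcont.comp (Continuous.prodMk_right θ))).continuousAt
    have hmap : (fun x => (T (θ, x)).2) (sSup (F θ)) = sSup ((fun x => (T (θ, x)).2) '' F θ) :=
      Monotone.map_csSup_of_continuousAt hgc (hmono θ) (hfne θ) (hbddA θ)
    apply Prod.ext
    · exact hbase (θ, φ θ)
    · show (T (θ, φ θ)).2 = φ (θ + (ω : AddCircle (1:ℝ)))
      rw [hφdef]
      simp only
      rw [hFim, ← hmap]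
  -- the orbit of a sup point stays on the graph of φ
  have hgraph : ∀ n : ℕ, (T^[n] ((0 : AddCircle (1:ℝ)), φ 0)).2 = φ ((T^[n] ((0 : AddCircle (1:ℝ)), φ 0)).1) := by
    intro n
    induction n with
    | zero => rfl
    | succ n ih =>
      rw [Function.iterate_succ_apply']
      set p := T^[n] ((0 : AddCircle (1:ℝ)), φ 0) with hp
      have : T p = (p.1 + (ω : AddCircle (1:ℝ)), φ (p.1 + (ω : AddCircle (1:ℝ)))) := by
        conv_lhs => rw [← Prod.mk.eta (p := p), ih]
        exact hstep p.1
      rw [this]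
  have hAcl : A ⊆ closure {p : AddCircle (1:ℝ) × ℝ | p.2 = φ p.1} := by
    rw [← hmin ((0 : AddCircle (1:ℝ)), φ 0) (hmemA 0)]
    exact closure_mono (range_subset_iff.2 fun n => hgraph n)
  -- at a continuity point of φ the fibre is a single point
  have hkey : ∀ θ, ContinuousAt φ θ → sSup (F θ) = sInf (F θ) := by
    intro θ hc
    have hIm : sInf (F θ) ∈ F θ := (hFcpt θ).sInf_mem (hfne θ)
    have hall : ∀ x ∈ F θ, x = φ θ := by
      intro x hx
      by_contra hne'
      have hlt : x < φ θ := lt_of_le_of_ne (le_csSup (hbddA θ) hx) hne'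
      set x' : ℝ := (x + φ θ) / 2 with hx'
      have h1 : x < x' := by rw [hx']; linarith
      have h2 : x' < φ θ := by rw [hx']; linarith
      have hnh : φ ⁻¹' Ioi x' ∈ nhds θ := hc (Ioi_mem_nhds h2)
      obtain ⟨U, hU, hUo, hθU⟩ := mem_nhds_iff.1 hnh
      have hopen : IsOpen (U ×ˢ Iio x') := hUo.prod isOpen_Iio
      have hmem : ((θ : AddCircle (1:ℝ)), x) ∈ U ×ˢ Iio x' := ⟨hθU, h1⟩
      have hclos : ((θ : AddCircle (1:ℝ)), x) ∈
          closure {p : AddCircle (1:ℝ) × ℝ | p.2 = φ p.1} := hAcl hx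
      obtain ⟨q, ⟨hq1, hq2⟩, hq3⟩ := mem_closure_iff.1 hclos _ hopen hmem
      have : x' < q.2 := by rw [hq3]; exact hU hq1
      exact absurd hq2 (not_lt.2 (le_of_lt this))
    exact ((hall _ hIm).trans rfl).symm ▸ (hall _ hIm).symm
  -- discontinuity points of φ are meagre
  have hUSC : UpperSemicontinuous φ := by
    rw [upperSemicontinuous_iff_isOpen_preimage]
    intro y
    exact husc y
  have hmeag : IsMeagre {θ : AddCircle (1:ℝ) | ¬ ContinuousAt φ θ} := by
    rw [isMeagre_iff_countable_union_isNowhereDense]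
    refine ⟨Set.range (fun qr : ℚ × ℚ =>
      if (qr.1 : ℝ) < (qr.2 : ℝ) then
        closure {θ | φ θ < (qr.1 : ℝ)} ∩ {θ | (qr.2 : ℝ) ≤ φ θ} else (∅ : Set (AddCircle (1:ℝ)))),
      ?_, countable_range _, ?_⟩
    · rintro t ⟨⟨q, r⟩, rfl⟩
      show IsNowhereDense (if ((q:ℝ) < (r:ℝ)) then
        closure {θ | φ θ < (q : ℝ)} ∩ {θ | (r : ℝ) ≤ φ θ} else (∅ : Set (AddCircle (1:ℝ))))
      by_cases hqr : (q : ℝ) < (r : ℝ)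
      · rw [if_pos hqr]
        have hcl : IsClosed (closure {θ | φ θ < (q : ℝ)} ∩ {θ | (r : ℝ) ≤ φ θ}) := by
          refine isClosed_closure.inter ?_
          have : {θ | (r : ℝ) ≤ φ θ} = {θ | φ θ < (r : ℝ)}ᶜ := by
            ext θ; simp [not_lt]
          rw [this, ← isOpen_compl_iff, compl_compl]
          exact husc r
        rw [hcl.isNowhereDense_iff]
        by_contra hne'
        obtain ⟨θ, hθ⟩ := nonempty_iff_ne_empty.2 hne'
        have hθ1 : θ ∈ closure {θ | φ θ < (q : ℝ)} := (interior_subset hθ).1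
        obtain ⟨θ', hθ'⟩ := mem_closure_iff.1 hθ1 _ isOpen_interior hθ
        have h1 : (r : ℝ) ≤ φ θ' := (interior_subset hθ'.1).2
        have h2 : φ θ' < (q : ℝ) := hθ'.2
        linarith
      · rw [if_neg hqr]; exact isNowhereDense_empty
    · intro θ hθ
      simp only [mem_setOf_eq] at hθ
      rw [continuousAt_iff_lower_upperSemicontinuousAt] at hθ
      have hnl : ¬ LowerSemicontinuousAt φ θ := fun h => hθ ⟨h, hUSC θ⟩
      rw [lowerSemicontinuousAt_iff] at hnl
      push_neg at hnl
      obtain ⟨y, hy, hfreq⟩ := hnl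
      replace hfreq : ∃ᶠ x in nhds θ, ¬ y < φ x := hfreq.mono fun x h => not_lt.2 h
      obtain ⟨q, hq1, hq2⟩ := exists_rat_btwn hy
      obtain ⟨r, hr1, hr2⟩ := exists_rat_btwn hq2
      refine mem_sUnion.2 ⟨_, ⟨(q, r), rfl⟩, ?_⟩
      show θ ∈ (if ((q:ℝ) < (r:ℝ)) then
        closure {θ | φ θ < (q : ℝ)} ∩ {θ | (r : ℝ) ≤ φ θ} else (∅ : Set (AddCircle (1:ℝ))))
      rw [if_pos hr1]
      constructor
      · rw [mem_closure_iff_frequently]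
        exact hfreq.mono (fun θ' h => by simpa using lt_of_le_of_lt (not_lt.1 h) hq1)
      · exact le_of_lt hr2
  have hres : {θ : AddCircle (1:ℝ) | ContinuousAt φ θ} ∈ residual (AddCircle (1:ℝ)) := by
    rw [IsMeagre] at hmeag
    simpa [compl_setOf] using hmeag
  exact Filter.mem_of_superset hres (fun θ hθ => hkey θ hθ)
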